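/- arXiv:2004.10821 — 5 statements merged into one kernel-verified Lean document; each statement's English description precedes it below -/
import Mathlib

section
/- A subspace D ⊆ ℝⁿ × ℝⁿ is a Dirac structure if, and only if, there exist matrices K, L ∈ ℝ^{n×n} with K·Lᵀ + L·Kᵀ = 0 and rank [K L] = n (the n×2n block matrix), such that D = {(f,e) ∈ ℝⁿ × ℝⁿ | K·f + L·e = 0}. -/
open Matrix
/-- A set `D ⊆ ℝⁿ × ℝⁿ` is a Dirac structure if membership in `D` is equivalent to
being "orthogonal" to all of `D` with respect to the power pairing `eᵀf̂ + êᵀf`. -/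
def IsDirac {ι : Type} [Fintype ι] (D : Set ((ι → ℝ) × (ι → ℝ))) : Prop :=
  ∀ p : (ι → ℝ) × (ι → ℝ), p ∈ D ↔ ∀ q ∈ D, p.2 ⬝ᵥ q.1 + q.2 ⬝ᵥ p.1 = 0

open Module LinearMap

namespace DiracAux

variable {n : ℕ}

/-- The power pairing as a bilinear form on `ℝⁿ × ℝⁿ`. -/
noncomputable def Bf (n : ℕ) : LinearMap.BilinForm ℝ ((Fin n → ℝ) × (Fin n → ℝ)) :=
  LinearMap.mk₂ ℝ (fun p q => p.2 ⬝ᵥ q.1 + q.2 ⬝ᵥ p.1)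
    (fun p p' q => by
      simp only [Prod.fst_add, Prod.snd_add, add_dotProduct, dotProduct_add]; ring)
    (fun c p q => by
      simp only [Prod.smul_fst, Prod.smul_snd, smul_dotProduct, dotProduct_smul,
        smul_eq_mul]; ring)
    (fun p q q' => by
      simp only [Prod.fst_add, Prod.snd_add, add_dotProduct, dotProduct_add]; ring)
    (fun c p q => by
      simp only [Prod.smul_fst, Prod.smul_snd, smul_dotProduct, dotProduct_smul,
        smul_eq_mul]; ring)

lemma Bf_apply (p q : (Fin n → ℝ) × (Fin n → ℝ)) :
    Bf n p q = p.2 ⬝ᵥ q.1 + q.2 ⬝ᵥ p.1 := rfl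

lemma Bf_symm (p q : (Fin n → ℝ) × (Fin n → ℝ)) : Bf n p q = Bf n q p := by
  rw [Bf_apply, Bf_apply]; ring

lemma Bf_refl : (Bf n).IsRefl := fun p q h => (Bf_symm q p).trans h

lemma Bf_nondeg : (Bf n).Nondegenerate := by
  refine LinearMap.BilinForm.Nondegenerate.ofSeparatingLeft ?_
  intro p h
  have h0 := h (p.2, p.1)
  rw [Bf_apply] at h0
  have n1 : (0:ℝ) ≤ p.1 ⬝ᵥ p.1 := by
    rw [dotProduct]; exact Finset.sum_nonneg fun i _ => mul_self_nonneg _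
  have n2 : (0:ℝ) ≤ p.2 ⬝ᵥ p.2 := by
    rw [dotProduct]; exact Finset.sum_nonneg fun i _ => mul_self_nonneg _
  have e1 : p.1 = 0 := dotProduct_self_eq_zero.mp (by simp at h0; linarith)
  have e2 : p.2 = 0 := dotProduct_self_eq_zero.mp (by simp at h0; linarith)
  exact Prod.ext e1 e2

lemma finrank_Vn : finrank ℝ ((Fin n → ℝ) × (Fin n → ℝ)) = 2 * n := by
  rw [Module.finrank_prod, Module.finrank_fin_fun]; ring

noncomputable def E (n : ℕ) : ((Fin n ⊕ Fin n) → ℝ) ≃ₗ[ℝ] (Fin n → ℝ) × (Fin n → ℝ) :=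
  LinearEquiv.sumArrowLequivProdArrow _ _ ℝ ℝ

/-- kernel map of the pair `(K, L)` -/
noncomputable def T (K L : Matrix (Fin n) (Fin n) ℝ) :
    ((Fin n → ℝ) × (Fin n → ℝ)) →ₗ[ℝ] (Fin n → ℝ) :=
  (fromCols K L).mulVecLin ∘ₗ (E n).symm.toLinearMap

lemma T_apply (K L : Matrix (Fin n) (Fin n) ℝ) (p : (Fin n → ℝ) × (Fin n → ℝ)) :
    T K L p = K *ᵥ p.1 + L *ᵥ p.2 := by
  show (fromCols K L) *ᵥ ((E n).symm p) = _
  have h : (E n).symm p = Sum.elim p.1 p.2 := by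
    ext x; cases x <;> rfl
  rw [h, fromCols_mulVec_sumElim]

lemma rank_add_finrank_kerT (K L : Matrix (Fin n) (Fin n) ℝ) :
    (fromCols K L).rank + finrank ℝ (ker (T K L)) = 2 * n := by
  have h1 : ker (T K L)
      = Submodule.comap (E n).symm.toLinearMap (ker (fromCols K L).mulVecLin) :=
    ker_comp _ _
  have h2 : finrank ℝ (ker (T K L)) = finrank ℝ (ker (fromCols K L).mulVecLin) := by
    rw [h1, Submodule.comap_equiv_eq_map_symm, LinearEquiv.finrank_map_eq]
  rw [h2, Matrix.rank, LinearMap.finrank_range_add_finrank_ker,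
    Module.finrank_pi, Fintype.card_sum, Fintype.card_fin]
  ring

/-- image map of the pair `(K, L)` -/
noncomputable def S (K L : Matrix (Fin n) (Fin n) ℝ) :
    (Fin n → ℝ) →ₗ[ℝ] ((Fin n → ℝ) × (Fin n → ℝ)) :=
  LinearMap.prod (Lᵀ.mulVecLin) (Kᵀ.mulVecLin)

lemma S_apply (K L : Matrix (Fin n) (Fin n) ℝ) (l : Fin n → ℝ) :
    S K L l = (Lᵀ *ᵥ l, Kᵀ *ᵥ l) := rfl

lemma finrank_range_S (K L : Matrix (Fin n) (Fin n) ℝ) :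
    finrank ℝ (range (S K L)) = (fromCols K L).rank := by
  have hS : S K L
      = (((E n).trans (LinearEquiv.prodComm ℝ _ _)).toLinearMap).comp
          (fromRows Kᵀ Lᵀ).mulVecLin := by
    ext l
    · simp [S_apply, fromRows_mulVec, E, LinearEquiv.sumArrowLequivProdArrow]
    · simp [S_apply, fromRows_mulVec, E, LinearEquiv.sumArrowLequivProdArrow]
  rw [hS, range_comp, LinearEquiv.finrank_map_eq, ← Matrix.rank,
    ← transpose_fromCols, rank_transpose]

lemma mem_orth_iff (D : Submodule ℝ ((Fin n → ℝ) × (Fin n → ℝ)))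
    (p : (Fin n → ℝ) × (Fin n → ℝ)) :
    p ∈ (Bf n).orthogonal D ↔ ∀ q ∈ D, p.2 ⬝ᵥ q.1 + q.2 ⬝ᵥ p.1 = 0 := by
  rw [LinearMap.BilinForm.mem_orthogonal_iff]
  constructor
  · intro h q hq
    have := h q hq
    rw [Bf_apply] at this
    linarith
  · intro h q hq
    rw [Bf_apply]
    have := h q hq
    linarith

lemma isDirac_iff (D : Submodule ℝ ((Fin n → ℝ) × (Fin n → ℝ))) :
    IsDirac (D : Set ((Fin n → ℝ) × (Fin n → ℝ))) ↔ D = (Bf n).orthogonal D := by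
  constructor
  · intro h
    ext p
    rw [mem_orth_iff]
    exact h p
  · intro h p
    rw [show (p ∈ (D:Set _)) = (p ∈ D) from rfl, h, mem_orth_iff, ← h]
    exact Iff.rfl

end DiracAux

open DiracAux LinearMap Module in
/-- A subspace `D ⊆ ℝⁿ × ℝⁿ` is a Dirac structure iff there are `K, L ∈ ℝ^{n×n}` with
`K Lᵀ + L Kᵀ = 0` and `rank [K L] = n` such that `D = {(f,e) | K f + L e = 0}`. -/
theorem dirac_iff_kernel_representation (n : ℕ)
    (D : Submodule ℝ ((Fin n → ℝ) × (Fin n → ℝ))) :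
    IsDirac (D : Set ((Fin n → ℝ) × (Fin n → ℝ))) ↔
      ∃ K L : Matrix (Fin n) (Fin n) ℝ,
        K * L.transpose + L * K.transpose = 0 ∧
        (Matrix.fromCols K L).rank = n ∧
        (D : Set ((Fin n → ℝ) × (Fin n → ℝ))) =
          {p : (Fin n → ℝ) × (Fin n → ℝ) | K.mulVec p.1 + L.mulVec p.2 = 0} := by
  classical
  rw [DiracAux.isDirac_iff]
  constructor
  · intro hDo
    have hle2n : finrank ℝ D ≤ 2 * n := by
      have := Submodule.finrank_le D; rwa [DiracAux.finrank_Vn] at this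
    have horth := LinearMap.BilinForm.finrank_orthogonal DiracAux.Bf_nondeg D
    rw [DiracAux.finrank_Vn, ← hDo] at horth
    have hdim : finrank ℝ D = n := by omega
    let b : Basis (Fin n) ℝ D := Module.finBasisOfFinrankEq ℝ D hdim
    let d : Fin n → (Fin n → ℝ) × (Fin n → ℝ) := fun i => (b i : _)
    let K : Matrix (Fin n) (Fin n) ℝ := Matrix.of fun i j => (d i).2 j
    let L : Matrix (Fin n) (Fin n) ℝ := Matrix.of fun i j => (d i).1 j
    have hdmem : ∀ i, d i ∈ D := fun i => (b i).2
    have hspan : D = Submodule.span ℝ (Set.range d) := by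
      conv_lhs => rw [← Submodule.map_subtype_top D]
      rw [← b.span_eq, Submodule.map_span, ← Set.range_comp]
      rfl
    have hTmem : ∀ p, DiracAux.T K L p = 0 ↔ ∀ i, DiracAux.Bf n (d i) p = 0 := by
      intro p
      rw [DiracAux.T_apply, funext_iff]
      refine forall_congr' fun i => ?_
      rw [DiracAux.Bf_apply]
      show (K *ᵥ p.1) i + (L *ᵥ p.2) i = (0 : Fin n → ℝ) i ↔ _
      have hK : (K *ᵥ p.1) i = (d i).2 ⬝ᵥ p.1 := rfl
      have hL : (L *ᵥ p.2) i = p.2 ⬝ᵥ (d i).1 := dotProduct_comm _ _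
      rw [hK, hL, Pi.zero_apply]
    have hker : LinearMap.ker (DiracAux.T K L) = D := by
      ext p
      rw [LinearMap.mem_ker, hTmem]
      constructor
      · intro h
        rw [hDo, LinearMap.BilinForm.mem_orthogonal_iff]
        intro q hq
        rw [hspan] at hq
        have hsub : Submodule.span ℝ (Set.range d) ≤ LinearMap.ker ((DiracAux.Bf n).flip p) := by
          rw [Submodule.span_le]
          rintro _ ⟨i, rfl⟩
          simpa using h i
        simpa using hsub hq
      · intro hp i
        have hpo : p ∈ (DiracAux.Bf n).orthogonal D := hDo ▸ hp
        exact LinearMap.BilinForm.mem_orthogonal_iff.mp hpo (d i) (hdmem i)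
    have hKL : K * Lᵀ + L * Kᵀ = 0 := by
      ext i j
      have hij : DiracAux.Bf n (d i) (d j) = 0 := by
        have h1 : d j ∈ (DiracAux.Bf n).orthogonal D := hDo ▸ hdmem j
        exact LinearMap.BilinForm.mem_orthogonal_iff.mp h1 (d i) (hdmem i)
      rw [DiracAux.Bf_apply] at hij
      simp only [Matrix.add_apply, Matrix.mul_apply, Matrix.transpose_apply,
        Matrix.zero_apply, Matrix.of_apply, K, L]
      rw [dotProduct, dotProduct] at hij
      have hcomm : ∑ x, (d i).1 x * (d j).2 x = ∑ x, (d j).2 x * (d i).1 x :=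
        Finset.sum_congr rfl fun k _ => mul_comm _ _
      linarith [hij, hcomm]
    have hrk : (Matrix.fromCols K L).rank = n := by
      have h := DiracAux.rank_add_finrank_kerT K L
      rw [hker, hdim] at h
      omega
    refine ⟨K, L, hKL, hrk, ?_⟩
    ext p
    simp only [SetLike.mem_coe, Set.mem_setOf_eq]
    rw [← hker, LinearMap.mem_ker, DiracAux.T_apply]
  · rintro ⟨K, L, hKL, hrk, hset⟩
    have hDker : D = LinearMap.ker (DiracAux.T K L) := by
      ext p
      rw [LinearMap.mem_ker, DiracAux.T_apply]
      exact Set.ext_iff.mp hset p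
    have hdim : finrank ℝ D = n := by
      have h := DiracAux.rank_add_finrank_kerT K L
      rw [← hDker, hrk] at h; omega
    have hle : LinearMap.range (DiracAux.S K L) ≤ D := by
      rintro _ ⟨l, rfl⟩
      rw [hDker, LinearMap.mem_ker, DiracAux.T_apply, DiracAux.S_apply]
      show K *ᵥ (Lᵀ *ᵥ l) + L *ᵥ (Kᵀ *ᵥ l) = 0
      rw [Matrix.mulVec_mulVec, Matrix.mulVec_mulVec, ← Matrix.add_mulVec, hKL,
        Matrix.zero_mulVec]
    have hrange : LinearMap.range (DiracAux.S K L) = D := by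
      apply Submodule.eq_of_le_of_finrank_eq hle
      rw [DiracAux.finrank_range_S, hrk, hdim]
    have hiso : D ≤ (DiracAux.Bf n).orthogonal D := by
      intro p hp
      rw [LinearMap.BilinForm.mem_orthogonal_iff]
      intro q hq
      rw [← hrange] at hp hq
      obtain ⟨l, rfl⟩ := hp
      obtain ⟨m, rfl⟩ := hq
      rw [DiracAux.Bf_apply, DiracAux.S_apply,
        DiracAux.S_apply]
      show (Kᵀ *ᵥ m) ⬝ᵥ (Lᵀ *ᵥ l) + (Kᵀ *ᵥ l) ⬝ᵥ (Lᵀ *ᵥ m) = 0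
      have key : ∀ a c : Fin n → ℝ, (Kᵀ *ᵥ a) ⬝ᵥ (Lᵀ *ᵥ c) = a ⬝ᵥ ((K * Lᵀ) *ᵥ c) := by
        intro a c
        rw [Matrix.mulVec_transpose, ← Matrix.dotProduct_mulVec, Matrix.mulVec_mulVec]
      rw [key, key]
      have h2 : m ⬝ᵥ ((K * Lᵀ) *ᵥ l) = l ⬝ᵥ ((L * Kᵀ) *ᵥ m) := by
        rw [Matrix.dotProduct_mulVec, dotProduct_comm, ← Matrix.mulVec_transpose,
          Matrix.transpose_mul, Matrix.transpose_transpose]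
      rw [h2, ← dotProduct_add, ← Matrix.add_mulVec, add_comm (L * Kᵀ), hKL,
        Matrix.zero_mulVec, dotProduct_zero]
    have horth := LinearMap.BilinForm.finrank_orthogonal DiracAux.Bf_nondeg D
    rw [DiracAux.finrank_Vn, hdim] at horth
    exact Submodule.eq_of_le_of_finrank_eq hiso (by rw [hdim, horth]; omega)
end

section
/- A subspace L ⊆ ℝⁿ × ℝⁿ is a Lagrangian subspace if, and only if, there exist matrices S, P ∈ ℝ^{n×n} with Sᵀ·P = Pᵀ·S and rank [Sᵀ Pᵀ] = n (the n×2n block matrix), such that L = {(f,e) ∈ ℝⁿ × ℝⁿ | Sᵀ·f = Pᵀ·e}. -/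
open Matrix

/-- A set `L ⊆ ℝⁿ × ℝⁿ` is a Lagrangian subspace if membership in `L` is equivalent to
being "orthogonal" to all of `L` with respect to the symplectic pairing `v₁ᵀw₂ − v₂ᵀw₁`. -/
def IsLagrangian {ι : Type} [Fintype ι] (L : Set ((ι → ℝ) × (ι → ℝ))) : Prop :=
  ∀ p : (ι → ℝ) × (ι → ℝ), p ∈ L ↔ ∀ q ∈ L, p.1 ⬝ᵥ q.2 - p.2 ⬝ᵥ q.1 = 0

namespace LagrangianAux

noncomputable section

/-- The symplectic bilinear form on `ℝⁿ × ℝⁿ`. -/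
def Ω (n : ℕ) : LinearMap.BilinForm ℝ ((Fin n → ℝ) × (Fin n → ℝ)) :=
  LinearMap.mk₂ ℝ (fun p q => p.1 ⬝ᵥ q.2 - p.2 ⬝ᵥ q.1)
    (fun p p' q => by simp [add_dotProduct]; ring)
    (fun c p q => by simp [smul_dotProduct]; ring)
    (fun p q q' => by simp [dotProduct_add]; ring)
    (fun c p q => by simp [dotProduct_smul]; ring)

@[simp] lemma Ω_apply (n : ℕ) (p q : (Fin n → ℝ) × (Fin n → ℝ)) :
    Ω n p q = p.1 ⬝ᵥ q.2 - p.2 ⬝ᵥ q.1 := rfl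

lemma dp_self_nonneg {n : ℕ} (v : Fin n → ℝ) : 0 ≤ v ⬝ᵥ v :=
  Finset.sum_nonneg fun _ _ => mul_self_nonneg _

lemma Ω_isRefl (n : ℕ) : (Ω n).IsRefl := by
  intro p q h
  simp only [Ω_apply] at *
  rw [dotProduct_comm q.1, dotProduct_comm q.2]
  linarith

lemma Ω_nondegenerate (n : ℕ) : (Ω n).Nondegenerate := by
  refine (LinearMap.IsRefl.nondegenerate_iff_separatingLeft (Ω_isRefl n)).mpr ?_
  intro p h
  have h1 : p.1 ⬝ᵥ p.1 + p.2 ⬝ᵥ p.2 = 0 := by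
    have := h (-p.2, p.1)
    simp only [Ω_apply, dotProduct_neg] at this
    linarith
  have h2 : p.1 ⬝ᵥ p.1 = 0 := le_antisymm (by nlinarith [dp_self_nonneg p.2]) (dp_self_nonneg p.1)
  have h3 : p.2 ⬝ᵥ p.2 = 0 := by linarith
  have := dotProduct_self_eq_zero.mp h2
  have := dotProduct_self_eq_zero.mp h3
  exact Prod.ext (by assumption) (by assumption)

lemma rank_fromRows_eq {n : ℕ} (A B : Matrix (Fin n) (Fin n) ℝ) :
    (Matrix.fromRows A B).rank =
      Module.finrank ℝ (LinearMap.range (LinearMap.prod A.mulVecLin B.mulVecLin)) := by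
  have h : LinearMap.prod A.mulVecLin B.mulVecLin =
      (LinearEquiv.sumArrowLequivProdArrow (Fin n) (Fin n) ℝ ℝ).toLinearMap ∘ₗ
        (Matrix.fromRows A B).mulVecLin := by
    apply LinearMap.ext
    intro x
    apply Prod.ext
    · funext a
      simp [Matrix.fromRows_mulVec, LinearEquiv.sumArrowLequivProdArrow]
    · funext a
      simp [Matrix.fromRows_mulVec, LinearEquiv.sumArrowLequivProdArrow]
  rw [Matrix.rank, h, LinearMap.range_comp, LinearEquiv.finrank_map_eq]

end

end LagrangianAux

open LagrangianAux

/-- A subspace `L ⊆ ℝⁿ × ℝⁿ` is Lagrangian iff there are `S, P ∈ ℝ^{n×n}` with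
`Sᵀ P = Pᵀ S` and `rank [Sᵀ Pᵀ] = n` such that `L = {(f,e) | Sᵀ f = Pᵀ e}`. -/
theorem lagrangian_iff_kernel_representation (n : ℕ)
    (L : Submodule ℝ ((Fin n → ℝ) × (Fin n → ℝ))) :
    IsLagrangian (L : Set ((Fin n → ℝ) × (Fin n → ℝ))) ↔
      ∃ S P : Matrix (Fin n) (Fin n) ℝ,
        S.transpose * P = P.transpose * S ∧
        (Matrix.fromCols S.transpose P.transpose).rank = n ∧
        (L : Set ((Fin n → ℝ) × (Fin n → ℝ))) =
          {p : (Fin n → ℝ) × (Fin n → ℝ) |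
            S.transpose.mulVec p.1 = P.transpose.mulVec p.2} := by
  constructor
  · -- forward direction
    intro hL
    -- L equals its symplectic orthogonal complement (as submodules)
    have horth : (Ω n).orthogonal L = L := by
      ext p
      rw [LinearMap.BilinForm.mem_orthogonal_iff]
      constructor
      · intro h
        rw [← SetLike.mem_coe, hL p]
        intro q hq
        have h' := h q hq
        have := Ω_isRefl n q p h'
        simpa using this
      · intro hp q hq
        have := (hL q).mp hq p hp
        exact this
    have hdim : Module.finrank ℝ L = n := by
      have h1 := LinearMap.BilinForm.finrank_orthogonal (Ω_nondegenerate n) L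
      rw [horth] at h1
      have h2 : Module.finrank ℝ ((Fin n → ℝ) × (Fin n → ℝ)) = n + n := by
        simp [Module.finrank_prod]
      have h3 := Submodule.finrank_le L
      omega
    let b : Module.Basis (Fin n) ℝ L := Module.finBasisOfFinrankEq ℝ L hdim
    set S : Matrix (Fin n) (Fin n) ℝ := Matrix.of fun i j => ((b j : (Fin n → ℝ) × (Fin n → ℝ)).2) i with hS
    set P : Matrix (Fin n) (Fin n) ℝ := Matrix.of fun i j => ((b j : (Fin n → ℝ) × (Fin n → ℝ)).1) i with hP
    have key : ∀ u v : L, ((u : (Fin n → ℝ) × (Fin n → ℝ)).1 ⬝ᵥ (v : (Fin n → ℝ) × (Fin n → ℝ)).2)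
        - ((u : (Fin n → ℝ) × (Fin n → ℝ)).2 ⬝ᵥ (v : (Fin n → ℝ) × (Fin n → ℝ)).1) = 0 :=
      fun u v => (hL u).mp (SetLike.mem_coe.mpr u.2) v (SetLike.mem_coe.mpr v.2)
    refine ⟨S, P, ?_, ?_, ?_⟩
    · ext j k
      have := key (b j) (b k)
      simp only [Matrix.mul_apply, Matrix.transpose_apply, hS, hP, Matrix.of_apply]
      rw [sub_eq_zero] at this
      simpa [dotProduct, mul_comm] using this.symm
    · -- rank
      have hsum : ∀ x : Fin n → ℝ,
          (((∑ j, x j • b j : L) : (Fin n → ℝ) × (Fin n → ℝ))) = (P *ᵥ x, S *ᵥ x) := by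
        intro x
        rw [Submodule.coe_sum]
        apply Prod.ext
        · funext i
          simp [Matrix.mulVec, dotProduct, hP, Prod.fst_sum, Finset.sum_apply,
            mul_comm]
        · funext i
          simp [Matrix.mulVec, dotProduct, hS, Prod.snd_sum, Finset.sum_apply,
            mul_comm]
      have hinj : Function.Injective (LinearMap.prod S.mulVecLin P.mulVecLin) := by
        rw [injective_iff_map_eq_zero]
        intro x hx
        simp only [LinearMap.prod_apply, Function.prod, Matrix.mulVecLin_apply, Prod.mk_eq_zero] at hx
        have hzero : (∑ j, x j • b j : L) = 0 := by
          apply Subtype.ext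
          rw [hsum x]
          exact Prod.ext hx.2 hx.1
        have hli := b.linearIndependent
        rw [Fintype.linearIndependent_iff] at hli
        funext j
        exact hli x hzero j
      rw [← Matrix.rank_transpose, Matrix.transpose_fromCols, Matrix.transpose_transpose,
        Matrix.transpose_transpose, rank_fromRows_eq, LinearMap.finrank_range_of_inj hinj,
        Module.finrank_fin_fun]
    · -- set equality
      ext p
      have hchar : Sᵀ *ᵥ p.1 = Pᵀ *ᵥ p.2 ↔ ∀ j, Ω n p (b j) = 0 := by
        rw [funext_iff]
        apply forall_congr'
        intro j
        simp only [Matrix.mulVec, Matrix.transpose_apply, Ω_apply, hS, hP, Matrix.of_apply]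
        constructor
        · intro h
          rw [sub_eq_zero]
          rw [dotProduct_comm p.1, dotProduct_comm p.2]
          exact h
        · intro h
          rw [sub_eq_zero] at h
          rw [dotProduct_comm] at h
          rw [h, dotProduct_comm]
      rw [Set.mem_setOf_eq, hchar]
      constructor
      · intro hp j
        exact (hL p).mp hp (b j) (SetLike.mem_coe.mpr (b j).2)
      · intro h
        rw [SetLike.mem_coe, ← SetLike.mem_coe, hL p]
        intro q hq
        have hg : ((Ω n) p) ∘ₗ L.subtype = 0 := by
          apply b.ext
          intro j
          simpa using h j
        have := LinearMap.congr_fun hg ⟨q, hq⟩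
        simpa using this
  · -- backward direction
    rintro ⟨S, P, hSP, hrank, hset⟩
    have hmem : ∀ p : (Fin n → ℝ) × (Fin n → ℝ), p ∈ L ↔ Sᵀ *ᵥ p.1 = Pᵀ *ᵥ p.2 := by
      intro p
      rw [← SetLike.mem_coe, hset]
      rfl
    -- surjectivity of [Sᵀ Pᵀ]
    have htop : LinearMap.range (Matrix.fromCols Sᵀ Pᵀ).mulVecLin = ⊤ := by
      apply Submodule.eq_top_of_finrank_eq
      rw [Module.finrank_fin_fun]
      exact hrank
    have hsurj : ∀ v : Fin n → ℝ, ∃ a c : Fin n → ℝ, Sᵀ *ᵥ a + Pᵀ *ᵥ c = v := by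
      intro v
      have : v ∈ LinearMap.range (Matrix.fromCols Sᵀ Pᵀ).mulVecLin := htop ▸ trivial
      obtain ⟨w, hw⟩ := this
      refine ⟨w ∘ Sum.inl, w ∘ Sum.inr, ?_⟩
      have hwe : w = Sum.elim (w ∘ Sum.inl) (w ∘ Sum.inr) := by
        funext i; cases i <;> rfl
      rw [← Matrix.fromCols_mulVec_sumElim, ← hwe]
      exact hw
    -- the parametrization ψ
    set ψ : (Fin n → ℝ) →ₗ[ℝ] (Fin n → ℝ) × (Fin n → ℝ) :=
      LinearMap.prod P.mulVecLin S.mulVecLin with hψ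
    have hψmem : ∀ x, (P *ᵥ x, S *ᵥ x) ∈ L := by
      intro x
      rw [hmem]
      simp only
      rw [Matrix.mulVec_mulVec, Matrix.mulVec_mulVec, hSP]
    have hψinj : Function.Injective ψ := by
      rw [injective_iff_map_eq_zero]
      intro x hx
      simp only [hψ, LinearMap.prod_apply, Function.prod, Matrix.mulVecLin_apply,
        Prod.mk_eq_zero] at hx
      obtain ⟨a, c, hac⟩ := hsurj x
      have h1 : (Sᵀ *ᵥ a) ⬝ᵥ x = 0 := by
        rw [Matrix.mulVec_transpose, ← Matrix.dotProduct_mulVec, hx.2, dotProduct_zero]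
      have h2 : (Pᵀ *ᵥ c) ⬝ᵥ x = 0 := by
        rw [Matrix.mulVec_transpose, ← Matrix.dotProduct_mulVec, hx.1, dotProduct_zero]
      have hxx : x ⬝ᵥ x = 0 := by
        calc x ⬝ᵥ x = (Sᵀ *ᵥ a + Pᵀ *ᵥ c) ⬝ᵥ x := by rw [hac]
        _ = 0 := by rw [add_dotProduct, h1, h2, add_zero]
      exact dotProduct_self_eq_zero.mp hxx
    -- the defining map φ
    set φ : ((Fin n → ℝ) × (Fin n → ℝ)) →ₗ[ℝ] (Fin n → ℝ) :=
      Sᵀ.mulVecLin ∘ₗ LinearMap.fst ℝ _ _ - Pᵀ.mulVecLin ∘ₗ LinearMap.snd ℝ _ _ with hφ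
    have hφapp : ∀ p : (Fin n → ℝ) × (Fin n → ℝ), φ p = Sᵀ *ᵥ p.1 - Pᵀ *ᵥ p.2 := by
      intro p; simp [hφ, Matrix.mulVec_transpose]
    have hLker : L = LinearMap.ker φ := by
      ext p
      rw [hmem, LinearMap.mem_ker, hφapp, sub_eq_zero]
    have hφsurj : Function.Surjective φ := by
      intro v
      obtain ⟨a, c, hac⟩ := hsurj v
      refine ⟨(a, -c), ?_⟩
      rw [hφapp]
      simp only [Matrix.mulVec_neg]
      rw [sub_neg_eq_add]
      exact hac
    have hdimL : Module.finrank ℝ L = n := by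
      have h1 := LinearMap.finrank_range_add_finrank_ker φ
      rw [LinearMap.range_eq_top.mpr hφsurj] at h1
      have h2 : Module.finrank ℝ ((Fin n → ℝ) × (Fin n → ℝ)) = n + n := by
        simp [Module.finrank_prod]
      rw [finrank_top, h2, Module.finrank_fin_fun] at h1
      rw [hLker]
      omega
    have hrange : LinearMap.range ψ = L := by
      apply Submodule.eq_of_le_of_finrank_eq
      · rintro _ ⟨x, rfl⟩
        exact hψmem x
      · rw [LinearMap.finrank_range_of_inj hψinj, Module.finrank_fin_fun, hdimL]
    -- now prove Lagrangian
    intro p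
    constructor
    · intro hp q hq
      rw [SetLike.mem_coe, ← hrange] at hp hq
      obtain ⟨x, rfl⟩ := hp
      obtain ⟨y, rfl⟩ := hq
      simp only [hψ, LinearMap.prod_apply, Function.prod, Matrix.mulVecLin_apply]
      have e1 : (P *ᵥ x) ⬝ᵥ (S *ᵥ y) = x ⬝ᵥ ((Pᵀ * S) *ᵥ y) := by
        rw [← Matrix.mulVec_mulVec, Matrix.dotProduct_mulVec x, Matrix.vecMul_transpose]
      have e2 : (S *ᵥ x) ⬝ᵥ (P *ᵥ y) = x ⬝ᵥ ((Sᵀ * P) *ᵥ y) := by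
        rw [← Matrix.mulVec_mulVec, Matrix.dotProduct_mulVec x, Matrix.vecMul_transpose]
      rw [e1, e2, hSP, sub_self]
    · intro h
      have hd : ∀ y : Fin n → ℝ, (Sᵀ *ᵥ p.1 - Pᵀ *ᵥ p.2) ⬝ᵥ y = 0 := by
        intro y
        have := h (P *ᵥ y, S *ᵥ y) (SetLike.mem_coe.mpr (hψmem y))
        simp only at this
        rw [sub_dotProduct, Matrix.mulVec_transpose, Matrix.mulVec_transpose,
          ← Matrix.dotProduct_mulVec, ← Matrix.dotProduct_mulVec]
        exact this
      have hzero : Sᵀ *ᵥ p.1 - Pᵀ *ᵥ p.2 = 0 :=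
        dotProduct_self_eq_zero.mp (hd _)
      rw [SetLike.mem_coe, hmem, ← sub_eq_zero]
      exact hzero
end

section
/- Let ℓ, n₁, n₂ ∈ ℕ, let D₁ ⊆ (ℝ^{n₁} × ℝ^ℓ) × (ℝ^{n₁} × ℝ^ℓ) and D₂ ⊆ (ℝ^{n₂} × ℝ^ℓ) × (ℝ^{n₂} × ℝ^ℓ) be Dirac structures (with flow components (f₁, f_link) resp. (f₂, f_link) and effort components (e₁, e_link) resp. (e₂, e_link)). Then the composition D := {((f₁,f₂),(e₁,e₂)) ∈ ℝ^{n₁+n₂} × ℝ^{n₁+n₂} | ∃ (f_link, e_link) ∈ ℝ^ℓ × ℝ^ℓ such that (f₁, f_link, e₁, e_link) ∈ D₁ and (f₂, −f_link, e₂, e_link) ∈ D₂} is a Dirac structure in ℝ^{n₁+n₂} × ℝ^{n₁+n₂}. -/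
open Matrix

section Aux

open LinearMap

variable {ι : Type} [Fintype ι]

/-- The power pairing as a bilinear form. -/
noncomputable def pairForm (ι : Type) [Fintype ι] :
    LinearMap.BilinForm ℝ ((ι → ℝ) × (ι → ℝ)) :=
  LinearMap.mk₂ ℝ (fun p q => p.2 ⬝ᵥ q.1 + q.2 ⬝ᵥ p.1)
    (by intros; simp [add_dotProduct, dotProduct_add]; ring)
    (by intros; simp [smul_dotProduct, dotProduct_smul, smul_eq_mul]; ring)
    (by intros; simp [add_dotProduct, dotProduct_add]; ring)
    (by intros; simp [smul_dotProduct, dotProduct_smul, smul_eq_mul]; ring)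

@[simp] lemma pairForm_apply (p q : (ι → ℝ) × (ι → ℝ)) :
    pairForm ι p q = p.2 ⬝ᵥ q.1 + q.2 ⬝ᵥ p.1 := rfl

lemma pairForm_comm (p q : (ι → ℝ) × (ι → ℝ)) : pairForm ι p q = pairForm ι q p := by
  simp [dotProduct_comm]; ring

lemma pairForm_refl : (pairForm ι).IsRefl := by
  intro p q h; rwa [pairForm_comm]

lemma pairForm_nondeg [DecidableEq ι] : (pairForm ι).Nondegenerate := by
  suffices hL : LinearMap.SeparatingLeft (pairForm ι) from
    ⟨hL, fun p hp => hL p fun q => by rw [pairForm_comm]; exact hp q⟩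
  intro p hp
  have h1 : ∀ i, p.1 i = 0 := by
    intro i
    have := hp (0, Pi.single i 1)
    simpa [single_dotProduct] using this
  have h2 : ∀ i, p.2 i = 0 := by
    intro i
    have := hp (Pi.single i 1, 0)
    simpa [dotProduct_single] using this
  exact Prod.ext (funext h1) (funext h2)

/-- direct sum of two bilinear forms -/
noncomputable def prodForm {M₁ M₂ : Type*} [AddCommGroup M₁] [Module ℝ M₁]
    [AddCommGroup M₂] [Module ℝ M₂]
    (B₁ : LinearMap.BilinForm ℝ M₁) (B₂ : LinearMap.BilinForm ℝ M₂) :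
    LinearMap.BilinForm ℝ (M₁ × M₂) :=
  LinearMap.mk₂ ℝ (fun x y => B₁ x.1 y.1 + B₂ x.2 y.2)
    (by intros; simp; ring)
    (by intros; simp; ring)
    (by intros; simp; ring)
    (by intros; simp; ring)

@[simp] lemma prodForm_apply {M₁ M₂ : Type*} [AddCommGroup M₁] [Module ℝ M₁]
    [AddCommGroup M₂] [Module ℝ M₂]
    (B₁ : LinearMap.BilinForm ℝ M₁) (B₂ : LinearMap.BilinForm ℝ M₂)
    (x y : M₁ × M₂) : prodForm B₁ B₂ x y = B₁ x.1 y.1 + B₂ x.2 y.2 := rfl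

lemma prodForm_refl {M₁ M₂ : Type*} [AddCommGroup M₁] [Module ℝ M₁]
    [AddCommGroup M₂] [Module ℝ M₂]
    {B₁ : LinearMap.BilinForm ℝ M₁} {B₂ : LinearMap.BilinForm ℝ M₂}
    (h₁ : ∀ x y, B₁ x y = B₁ y x) (h₂ : ∀ x y, B₂ x y = B₂ y x) :
    (prodForm B₁ B₂).IsRefl := by
  intro x y h
  simp only [prodForm_apply] at h ⊢
  rw [h₁ y.1 x.1, h₂ y.2 x.2]; exact h

lemma prodForm_nondeg {M₁ M₂ : Type*} [AddCommGroup M₁] [Module ℝ M₁]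
    [AddCommGroup M₂] [Module ℝ M₂]
    {B₁ : LinearMap.BilinForm ℝ M₁} {B₂ : LinearMap.BilinForm ℝ M₂}
    (h₁ : B₁.Nondegenerate) (h₂ : B₂.Nondegenerate) :
    (prodForm B₁ B₂).Nondegenerate := by
  refine ⟨?_, fun x hx => Prod.ext (h₁.2 x.1 fun y => by simpa using hx (y, 0))
    (h₂.2 x.2 fun y => by simpa using hx (0, y))⟩
  intro x hx
  have e1 : x.1 = 0 := h₁.1 x.1 fun y => by simpa using hx (y, 0)
  have e2 : x.2 = 0 := h₂.1 x.2 fun y => by simpa using hx (0, y)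
  exact Prod.ext e1 e2

/-- Orthogonal complement of a sup. -/
lemma orthogonal_sup' {M : Type*} [AddCommGroup M] [Module ℝ M]
    (B : LinearMap.BilinForm ℝ M) (A A' : Submodule ℝ M) :
    B.orthogonal (A ⊔ A') = B.orthogonal A ⊓ B.orthogonal A' := by
  apply le_antisymm
  · exact le_inf (B.orthogonal_le le_sup_left) (B.orthogonal_le le_sup_right)
  · rintro x ⟨hxA, hxA'⟩ n hn
    obtain ⟨a, ha, b, hb, rfl⟩ := Submodule.mem_sup.mp hn
    have h1 := hxA a ha
    have h2 := hxA' b hb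
    rw [map_add, LinearMap.add_apply, h1, h2, add_zero]

/-- Orthogonal complement of a product submodule. -/
lemma orthogonal_prod {M₁ M₂ : Type*} [AddCommGroup M₁] [Module ℝ M₁]
    [AddCommGroup M₂] [Module ℝ M₂]
    (B₁ : LinearMap.BilinForm ℝ M₁) (B₂ : LinearMap.BilinForm ℝ M₂)
    (W₁ : Submodule ℝ M₁) (W₂ : Submodule ℝ M₂) :
    (prodForm B₁ B₂).orthogonal (W₁.prod W₂) = (B₁.orthogonal W₁).prod (B₂.orthogonal W₂) := by
  ext x
  constructor
  · intro hx
    constructor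
    · intro w hw
      have := hx (w, 0) ⟨hw, Submodule.zero_mem _⟩
      simpa [LinearMap.BilinForm.IsOrtho] using this
    · intro w hw
      have := hx (0, w) ⟨Submodule.zero_mem _, hw⟩
      simpa [LinearMap.BilinForm.IsOrtho] using this
  · rintro ⟨hx1, hx2⟩ ⟨w₁, w₂⟩ ⟨hw1, hw2⟩
    have e1 := hx1 w₁ hw1
    have e2 := hx2 w₂ hw2
    simp only [LinearMap.BilinForm.IsOrtho] at *
    simp [e1, e2]

/-- A Dirac structure is (the coercion of) a Lagrangian submodule. -/
lemma dirac_exists_submodule (D : Set ((ι → ℝ) × (ι → ℝ))) (hD : IsDirac D) :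
    ∃ W : Submodule ℝ ((ι → ℝ) × (ι → ℝ)),
      (W : Set ((ι → ℝ) × (ι → ℝ))) = D ∧ (pairForm ι).orthogonal W = W := by
  classical
  set W := (pairForm ι).orthogonal (Submodule.span ℝ D) with hWdef
  have hset : (W : Set ((ι → ℝ) × (ι → ℝ))) = D := by
    ext p
    rw [SetLike.mem_coe]
    have key : p ∈ (pairForm ι).orthogonal (Submodule.span ℝ D) ↔
        ∀ q ∈ D, pairForm ι q p = 0 := by
      constructor
      · intro h q hq; exact h q (Submodule.subset_span hq)
      · intro h q hq
        have hle : Submodule.span ℝ D ≤ LinearMap.ker ((pairForm ι).flip p) := by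
          rw [Submodule.span_le]
          intro r hr
          simpa [LinearMap.mem_ker] using h r hr
        simpa [LinearMap.BilinForm.IsOrtho, LinearMap.mem_ker] using hle hq
    rw [key]
    constructor
    · intro h
      rw [hD p]
      intro q hq
      have := h q hq
      rw [pairForm_comm] at this
      simpa using this
    · intro hp q hq
      have := (hD p).mp hp q hq
      rw [pairForm_comm]
      simpa using this
  refine ⟨W, hset, ?_⟩
  have hspan : Submodule.span ℝ D = W := by
    conv_lhs => rw [← hset]
    exact Submodule.span_eq W
  calc (pairForm ι).orthogonal W = (pairForm ι).orthogonal (Submodule.span ℝ D) := by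
        rw [hspan]
    _ = W := hWdef.symm

end Aux

section Split

lemma dotProduct_split {α β : Type} [Fintype α] [Fintype β] (u v : (α ⊕ β) → ℝ) :
    u ⬝ᵥ v = (fun i => u (Sum.inl i)) ⬝ᵥ (fun i => v (Sum.inl i)) +
      (fun j => u (Sum.inr j)) ⬝ᵥ (fun j => v (Sum.inr j)) := by
  simp [dotProduct, Fintype.sum_sum_type]

lemma fun_zero_dotProduct {α : Type} [Fintype α] (v : α → ℝ) :
    (fun _ => (0:ℝ)) ⬝ᵥ v = 0 := by simp [dotProduct]

lemma dotProduct_fun_zero {α : Type} [Fintype α] (v : α → ℝ) :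
    v ⬝ᵥ (fun _ => (0:ℝ)) = 0 := by simp [dotProduct]

lemma elim_dotProduct_elim {α β : Type} [Fintype α] [Fintype β]
    (a c : α → ℝ) (b d : β → ℝ) :
    Sum.elim a b ⬝ᵥ Sum.elim c d = a ⬝ᵥ c + b ⬝ᵥ d := by
  rw [dotProduct_split]
  simp

end Split

/-- The composition of two Dirac structures `D₁ ⊆ (ℝ^{n₁} × ℝ^ℓ) × (ℝ^{n₁} × ℝ^ℓ)` and
`D₂ ⊆ (ℝ^{n₂} × ℝ^ℓ) × (ℝ^{n₂} × ℝ^ℓ)` through the linking port variables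
`(f_link, e_link)` (with `-f_link` on the second system) is again a Dirac structure. -/
theorem dirac_composition (ℓ n₁ n₂ : ℕ)
    (D₁ : Set (((Fin n₁ ⊕ Fin ℓ) → ℝ) × ((Fin n₁ ⊕ Fin ℓ) → ℝ)))
    (D₂ : Set (((Fin n₂ ⊕ Fin ℓ) → ℝ) × ((Fin n₂ ⊕ Fin ℓ) → ℝ)))
    (h₁ : IsDirac D₁) (h₂ : IsDirac D₂) :
    IsDirac {p : ((Fin n₁ ⊕ Fin n₂) → ℝ) × ((Fin n₁ ⊕ Fin n₂) → ℝ) |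
      ∃ flink elink : Fin ℓ → ℝ,
        (Sum.elim (fun i => p.1 (Sum.inl i)) flink,
          Sum.elim (fun i => p.2 (Sum.inl i)) elink) ∈ D₁ ∧
        (Sum.elim (fun i => p.1 (Sum.inr i)) (-flink),
          Sum.elim (fun i => p.2 (Sum.inr i)) elink) ∈ D₂} := by
  classical
  intro p
  constructor
  · -- easy direction: composed structure is isotropic
    rintro ⟨fl, el, hp1, hp2⟩ q ⟨gl, ml, hq1, hq2⟩
    have e1 := (h₁ _).mp hp1 _ hq1
    have e2 := (h₂ _).mp hp2 _ hq2
    simp only [elim_dotProduct_elim, dotProduct_neg, neg_dotProduct] at e1 e2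
    rw [dotProduct_split p.2 q.1, dotProduct_split q.2 p.1]
    linarith
  · -- hard direction
    intro hp
    obtain ⟨W₁, hW₁set, hW₁orth⟩ := dirac_exists_submodule D₁ h₁
    obtain ⟨W₂, hW₂set, hW₂orth⟩ := dirac_exists_submodule D₂ h₂
    set B : LinearMap.BilinForm ℝ
        ((((Fin n₁ ⊕ Fin ℓ) → ℝ) × ((Fin n₁ ⊕ Fin ℓ) → ℝ)) ×
         (((Fin n₂ ⊕ Fin ℓ) → ℝ) × ((Fin n₂ ⊕ Fin ℓ) → ℝ))) :=
      prodForm (pairForm _) (pairForm _) with hBdef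
    have hBrefl : B.IsRefl := prodForm_refl pairForm_comm pairForm_comm
    have hBnondeg : B.Nondegenerate := prodForm_nondeg pairForm_nondeg pairForm_nondeg
    set W := W₁.prod W₂ with hWdef
    have hWorth : B.orthogonal W = W := by
      rw [hBdef, hWdef, orthogonal_prod, hW₁orth, hW₂orth]
    -- the linking constraint subspace
    set C : Submodule ℝ
        ((((Fin n₁ ⊕ Fin ℓ) → ℝ) × ((Fin n₁ ⊕ Fin ℓ) → ℝ)) ×
         (((Fin n₂ ⊕ Fin ℓ) → ℝ) × ((Fin n₂ ⊕ Fin ℓ) → ℝ))) :=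
      { carrier := {x | (∀ j, x.2.1 (Sum.inr j) = - x.1.1 (Sum.inr j)) ∧
          (∀ j, x.2.2 (Sum.inr j) = x.1.2 (Sum.inr j))}
        zero_mem' := by simp
        add_mem' := by
          rintro x y ⟨hx1, hx2⟩ ⟨hy1, hy2⟩
          constructor <;> intro j <;>
            simp only [Prod.fst_add, Prod.snd_add, Pi.add_apply, hx1 j, hx2 j, hy1 j, hy2 j] <;>
            ring
        smul_mem' := by
          rintro c x ⟨hx1, hx2⟩
          constructor <;> intro j <;>
            simp only [Prod.smul_fst, Prod.smul_snd, Pi.smul_apply, hx1 j, hx2 j,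
              smul_eq_mul] <;> ring } with hCdef
    -- the embedded point
    set ιp : (((Fin n₁ ⊕ Fin ℓ) → ℝ) × ((Fin n₁ ⊕ Fin ℓ) → ℝ)) ×
        (((Fin n₂ ⊕ Fin ℓ) → ℝ) × ((Fin n₂ ⊕ Fin ℓ) → ℝ)) :=
      ((Sum.elim (fun i => p.1 (Sum.inl i)) 0, Sum.elim (fun i => p.2 (Sum.inl i)) 0),
       (Sum.elim (fun i => p.1 (Sum.inr i)) 0, Sum.elim (fun i => p.2 (Sum.inr i)) 0))
      with hιp
    -- step A: ιp is orthogonal to W ⊓ C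
    have stepA : ιp ∈ B.orthogonal (W ⊓ C) := by
      rintro x ⟨hxW, hxC⟩
      have hx1 : x.1 ∈ D₁ := by rw [← hW₁set]; exact hxW.1
      have hx2 : x.2 ∈ D₂ := by rw [← hW₂set]; exact hxW.2
      obtain ⟨hlf, hle⟩ := hxC
      have hq : (Sum.elim (fun i => x.1.1 (Sum.inl i)) (fun i => x.2.1 (Sum.inl i)),
          Sum.elim (fun i => x.1.2 (Sum.inl i)) (fun i => x.2.2 (Sum.inl i))) ∈
          {p : ((Fin n₁ ⊕ Fin n₂) → ℝ) × ((Fin n₁ ⊕ Fin n₂) → ℝ) |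
            ∃ flink elink : Fin ℓ → ℝ,
              (Sum.elim (fun i => p.1 (Sum.inl i)) flink,
                Sum.elim (fun i => p.2 (Sum.inl i)) elink) ∈ D₁ ∧
              (Sum.elim (fun i => p.1 (Sum.inr i)) (-flink),
                Sum.elim (fun i => p.2 (Sum.inr i)) elink) ∈ D₂} := by
        refine ⟨fun j => x.1.1 (Sum.inr j), fun j => x.1.2 (Sum.inr j), ?_, ?_⟩
        · have : (Sum.elim
              (fun i => (Sum.elim (fun i => x.1.1 (Sum.inl i))
                (fun i => x.2.1 (Sum.inl i)) : _ → ℝ) (Sum.inl i))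
              (fun j => x.1.1 (Sum.inr j)),
            Sum.elim
              (fun i => (Sum.elim (fun i => x.1.2 (Sum.inl i))
                (fun i => x.2.2 (Sum.inl i)) : _ → ℝ) (Sum.inl i))
              (fun j => x.1.2 (Sum.inr j))) = x.1 := by
            refine Prod.ext ?_ ?_ <;> funext a <;> cases a <;> simp
          rw [this]; exact hx1
        · have : (Sum.elim
              (fun i => (Sum.elim (fun i => x.1.1 (Sum.inl i))
                (fun i => x.2.1 (Sum.inl i)) : _ → ℝ) (Sum.inr i))
              (-fun j => x.1.1 (Sum.inr j)),
            Sum.elim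
              (fun i => (Sum.elim (fun i => x.1.2 (Sum.inl i))
                (fun i => x.2.2 (Sum.inl i)) : _ → ℝ) (Sum.inr i))
              (fun j => x.1.2 (Sum.inr j))) = x.2 := by
            refine Prod.ext ?_ ?_ <;> funext a <;> cases a <;>
              simp [hlf, hle]
          rw [this]; exact hx2
      have := hp _ hq
      simp only [elim_dotProduct_elim] at this
      rw [dotProduct_split p.2, dotProduct_split _ p.1] at this
      show B x ιp = 0
      rw [hBdef, prodForm_apply, hιp]
      simp only [pairForm_apply]
      rw [dotProduct_split x.1.2, dotProduct_split _ x.1.1,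
        dotProduct_split x.2.2, dotProduct_split _ x.2.1]
      simp only [Sum.elim_inl, Sum.elim_inr, Pi.zero_apply, fun_zero_dotProduct,
        dotProduct_fun_zero, dotProduct_zero, zero_dotProduct, add_zero, zero_add]
      simp only [Sum.elim_inl, Sum.elim_inr] at this
      linarith
    -- step B: the orthogonal of W ⊓ C is W ⊔ orthogonal C
    have stepB : B.orthogonal (W ⊓ C) = W ⊔ B.orthogonal C := by
      have key : W ⊓ C = B.orthogonal (W ⊔ B.orthogonal C) := by
        rw [orthogonal_sup', hWorth,
          LinearMap.BilinForm.orthogonal_orthogonal hBnondeg hBrefl]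
      rw [key, LinearMap.BilinForm.orthogonal_orthogonal hBnondeg hBrefl]
    rw [stepB] at stepA
    obtain ⟨w, hw, c, hc, hwc⟩ := Submodule.mem_sup.mp stepA
    -- step C: structure of elements of the orthogonal of C
    have hc11 : ∀ i, c.1.1 (Sum.inl i) = 0 := by
      intro i
      have := hc ((0, Pi.single (Sum.inl i) 1), (0, 0)) ?_
      · simpa [LinearMap.BilinForm.IsOrtho, hBdef, single_dotProduct] using this
      · constructor <;> intro j <;> simp [Pi.single_eq_of_ne]
    have hc12 : ∀ i, c.1.2 (Sum.inl i) = 0 := by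
      intro i
      have := hc ((Pi.single (Sum.inl i) 1, 0), (0, 0)) ?_
      · simpa [LinearMap.BilinForm.IsOrtho, hBdef, dotProduct_single] using this
      · constructor <;> intro j <;> simp [Pi.single_eq_of_ne]
    have hc21 : ∀ i, c.2.1 (Sum.inl i) = 0 := by
      intro i
      have := hc ((0, 0), (0, Pi.single (Sum.inl i) 1)) ?_
      · simpa [LinearMap.BilinForm.IsOrtho, hBdef, single_dotProduct] using this
      · constructor <;> intro j <;> simp [Pi.single_eq_of_ne]
    have hc22 : ∀ i, c.2.2 (Sum.inl i) = 0 := by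
      intro i
      have := hc ((0, 0), (Pi.single (Sum.inl i) 1, 0)) ?_
      · simpa [LinearMap.BilinForm.IsOrtho, hBdef, dotProduct_single] using this
      · constructor <;> intro j <;> simp [Pi.single_eq_of_ne]
    have hcl1 : ∀ j, c.2.2 (Sum.inr j) = c.1.2 (Sum.inr j) := by
      intro j
      have := hc ((Pi.single (Sum.inr j) 1, 0), (-Pi.single (Sum.inr j) 1, 0)) ?_
      · have h' := this
        simp only [LinearMap.BilinForm.IsOrtho, hBdef, prodForm_apply, pairForm_apply,
          zero_dotProduct, dotProduct_single, neg_dotProduct, dotProduct_neg,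
          add_zero, zero_add, mul_one] at h'
        linarith
      · refine ⟨fun j' => ?_, fun j' => ?_⟩ <;>
        · by_cases h : j' = j
          · subst h; simp
          · simp [Pi.single_eq_of_ne, h]
    have hcl2 : ∀ j, c.2.1 (Sum.inr j) = - c.1.1 (Sum.inr j) := by
      intro j
      have := hc ((0, Pi.single (Sum.inr j) 1), (0, Pi.single (Sum.inr j) 1)) ?_
      · have h' := this
        simp only [LinearMap.BilinForm.IsOrtho, hBdef, prodForm_apply, pairForm_apply,
          zero_dotProduct, dotProduct_zero, single_dotProduct, add_zero, zero_add,
          one_mul] at h'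
        linarith
      · refine ⟨fun j' => ?_, fun j' => ?_⟩ <;>
        · by_cases h : j' = j
          · subst h; simp
          · simp [Pi.single_eq_of_ne, h]
    -- extract the witnesses
    refine ⟨fun j => - c.1.1 (Sum.inr j), fun j => - c.1.2 (Sum.inr j), ?_, ?_⟩
    · have hw1 : w.1 ∈ D₁ := by rw [← hW₁set]; exact hw.1
      have : (Sum.elim (fun i => p.1 (Sum.inl i)) (fun j => - c.1.1 (Sum.inr j)),
          Sum.elim (fun i => p.2 (Sum.inl i)) (fun j => - c.1.2 (Sum.inr j))) = w.1 := by
        have hw1eq : w.1 = ιp.1 - c.1 := by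
          have h' : w = ιp - c := by rw [← hwc]; abel
          rw [h']; rfl
        rw [hw1eq, hιp]
        refine Prod.ext ?_ ?_ <;> funext a <;> cases a <;>
          simp [hc11, hc12]
      rw [this]; exact hw1
    · have hw2 : w.2 ∈ D₂ := by rw [← hW₂set]; exact hw.2
      have : (Sum.elim (fun i => p.1 (Sum.inr i)) (-fun j => - c.1.1 (Sum.inr j)),
          Sum.elim (fun i => p.2 (Sum.inr i)) (fun j => - c.1.2 (Sum.inr j))) = w.2 := by
        have hw2eq : w.2 = ιp.2 - c.2 := by
          have h' : w = ιp - c := by rw [← hwc]; abel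
          rw [h']; rfl
        rw [hw2eq, hιp]
        refine Prod.ext ?_ ?_ <;> funext a <;> cases a <;>
          simp [hc21, hc22, hcl1, hcl2]
      rw [this]; exact hw2
end

section
/- For every ℓ ∈ ℕ, the subspace D_𝓛 := {(−u, i, i, u) ∈ ℝ^{2ℓ} × ℝ^{2ℓ} | u, i ∈ ℝ^ℓ} (flows (−u, i), efforts (i, u)) is a Dirac structure in ℝ^{2ℓ} × ℝ^{2ℓ}. -/
open Matrix

/-- For every `ℓ`, the subspace `D_𝓛 = {(−u, i, i, u) | u, i ∈ ℝ^ℓ}` with flows `(−u, i)`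
and efforts `(i, u)` (the inductance Dirac structure) is a Dirac structure. -/
theorem inductance_dirac (ℓ : ℕ) :
    IsDirac {p : ((Fin ℓ ⊕ Fin ℓ) → ℝ) × ((Fin ℓ ⊕ Fin ℓ) → ℝ) |
      ∃ u i : Fin ℓ → ℝ, p.1 = Sum.elim (-u) i ∧ p.2 = Sum.elim i u} := by
  intro p
  constructor
  · rintro ⟨u, i, hu, hi⟩ q ⟨v, j, hv, hj⟩
    rw [hu, hi, hv, hj]
    simp [dotProduct, Fintype.sum_sum_type, Finset.mul_sum, mul_comm]
  · intro h
    have h1 : ∀ k : Fin ℓ, p.1 (Sum.inl k) = -p.2 (Sum.inr k) := by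
      intro k
      have := h ⟨Sum.elim (-(0 : Fin ℓ → ℝ)) (Pi.single k 1),
        Sum.elim (Pi.single k 1) (0 : Fin ℓ → ℝ)⟩ ⟨0, Pi.single k 1, rfl, rfl⟩
      simp [dotProduct, Fintype.sum_sum_type, Pi.single_apply,
        Finset.sum_ite_eq'] at this
      linarith
    have h2 : ∀ k : Fin ℓ, p.1 (Sum.inr k) = p.2 (Sum.inl k) := by
      intro k
      have := h ⟨Sum.elim (-(Pi.single k 1)) (0 : Fin ℓ → ℝ),
        Sum.elim (0 : Fin ℓ → ℝ) (Pi.single k 1)⟩ ⟨Pi.single k 1, 0, rfl, rfl⟩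
      simp [dotProduct, Fintype.sum_sum_type, Pi.single_apply,
        Finset.sum_ite_eq'] at this
      linarith
    refine ⟨fun k => p.2 (Sum.inr k), fun k => p.2 (Sum.inl k), ?_, ?_⟩
    · funext k
      cases k with
      | inl k => simpa using h1 k
      | inr k => simpa using h2 k
    · funext k
      cases k with
      | inl k => rfl
      | inr k => rfl
end

section
/- Let i_S > 0, V_T > 0 and α_R, α_F ∈ (0,1) with α_F·α_R < 1. Define, for (u_BC, u_BE) ∈ ℝ², i_C(u_BC, u_BE) := i_S·(e^{u_BE/V_T} − 1) − (i_S/α_R)·(e^{u_BC/V_T} − 1) and i_E(u_BC, u_BE) := (i_S/α_F)·(e^{u_BE/V_T} − 1) − i_S·(e^{u_BC/V_T} − 1). Then there exists a neighborhood U₀ ⊆ ℝ² of the origin such that for all (u_BC, u_BE) ∈ U₀: u_BC·i_C(u_BC, u_BE) − u_BE·i_E(u_BC, u_BE) ≤ 0. In other words, the Ebers–Moll relation of an NPN transistor, restricted to a suitable neighborhood of the origin, is a resistive relation. -/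
/-- Upper linear bound for `exp t - 1` near 0. -/
lemma exp_sub_one_abs_le {δ t : ℝ} (hδ : 0 < δ) (ht : |t| ≤ δ) :
    |Real.exp t - 1| ≤ Real.exp δ * |t| := by
  rcases le_or_gt 0 t with h0 | h0
  · have h1 : Real.exp t - 1 ≤ t * Real.exp t := by
      nlinarith [Real.add_one_le_exp (-t), Real.exp_pos t, Real.exp_neg t,
        Real.exp_pos (-t), mul_pos (Real.exp_pos t) (Real.exp_pos (-t)),
        (by rw [← Real.exp_add]; simp : Real.exp t * Real.exp (-t) = 1)]
    have h2 : Real.exp t ≤ Real.exp δ := Real.exp_le_exp.2 (by rwa [abs_of_nonneg h0] at ht)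
    have h3 : (0:ℝ) ≤ Real.exp t - 1 := by
      have := Real.one_le_exp h0; linarith
    rw [abs_of_nonneg h3, abs_of_nonneg h0]
    nlinarith [Real.exp_pos t]
  · have h1 : 1 - Real.exp t ≤ -t := by
      have := Real.add_one_le_exp t; linarith
    have h3 : Real.exp t - 1 < 0 := by
      have h5 : Real.exp t < Real.exp 0 := Real.exp_lt_exp.2 h0
      rw [Real.exp_zero] at h5; linarith
    rw [abs_of_neg h3, abs_of_neg h0]
    have h4 : (1:ℝ) ≤ Real.exp δ := Real.one_le_exp hδ.le
    nlinarith
/-- Lower quadratic bound for `t (exp t - 1)` near 0. -/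
lemma exp_sub_one_quad {δ t : ℝ} (hδ : 0 < δ) (ht : |t| ≤ δ) :
    Real.exp (-δ) * t ^ 2 ≤ t * (Real.exp t - 1) := by
  have hed : Real.exp (-δ) ≤ 1 := Real.exp_le_one_iff.2 (by linarith)
  rcases le_or_gt 0 t with h0 | h0
  · have h1 : t ≤ Real.exp t - 1 := by have := Real.add_one_le_exp t; linarith
    nlinarith [Real.exp_pos (-δ)]
  · -- t < 0 : 1 - exp t ≥ (-t) exp t ≥ (-t) exp (-δ)
    have h1 : 1 - Real.exp t ≥ (-t) * Real.exp t := by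
      nlinarith [Real.add_one_le_exp (-t), Real.exp_pos t, Real.exp_pos (-t),
        (by rw [← Real.exp_add]; simp : Real.exp t * Real.exp (-t) = 1)]
    have h2 : Real.exp (-δ) ≤ Real.exp t := by
      apply Real.exp_le_exp.2
      rw [abs_of_neg h0] at ht; linarith
    nlinarith

set_option maxHeartbeats 1000000 in
/-- The Ebers–Moll relation of an NPN transistor, with collector current
`i_C = i_S (e^{u_BE/V_T} − 1) − (i_S/α_R)(e^{u_BC/V_T} − 1)` and emitter current
`i_E = (i_S/α_F)(e^{u_BE/V_T} − 1) − i_S (e^{u_BC/V_T} − 1)`, is resistive on a suitable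
neighborhood `U₀` of the origin: `u_BC · i_C − u_BE · i_E ≤ 0` on `U₀`. -/
theorem ebers_moll_locally_resistive (iS VT αR αF : ℝ)
    (hiS : 0 < iS) (hVT : 0 < VT)
    (hαR : αR ∈ Set.Ioo (0 : ℝ) 1) (hαF : αF ∈ Set.Ioo (0 : ℝ) 1)
    (h : αF * αR < 1) :
    ∃ U₀ ∈ nhds ((0, 0) : ℝ × ℝ), ∀ p ∈ U₀,
      p.1 * (iS * (Real.exp (p.2 / VT) - 1) - iS / αR * (Real.exp (p.1 / VT) - 1)) -
      p.2 * (iS / αF * (Real.exp (p.2 / VT) - 1) - iS * (Real.exp (p.1 / VT) - 1)) ≤ 0 := by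
  obtain ⟨hαR0, hαR1⟩ := hαR
  obtain ⟨hαF0, hαF1⟩ := hαF
  set s : ℝ := Real.sqrt (αR * αF) with hs
  have hs0 : 0 < s := Real.sqrt_pos.2 (by positivity)
  have hssq : s ^ 2 = αR * αF := Real.sq_sqrt (by positivity)
  have hs1 : s < 1 := by nlinarith
  set δ : ℝ := Real.log (1 / s) / 2 with hδ
  have hδ0 : 0 < δ := by
    have h1 : 1 < 1 / s := by rw [lt_div_iff₀ hs0]; linarith
    exact div_pos (Real.log_pos h1) two_pos
  have hexp2δ : Real.exp δ * Real.exp δ = 1 / s := by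
    rw [← Real.exp_add, show δ + δ = Real.log (1/s) by rw [hδ]; ring,
      Real.exp_log (by positivity)]
  refine ⟨Set.Ioo (-(VT*δ)) (VT*δ) ×ˢ Set.Ioo (-(VT*δ)) (VT*δ), ?_, ?_⟩
  · exact prod_mem_nhds
      (Ioo_mem_nhds (by nlinarith) (by positivity))
      (Ioo_mem_nhds (by nlinarith) (by positivity))
  · rintro ⟨x, y⟩ ⟨⟨hx1, hx2⟩, ⟨hy1, hy2⟩⟩
    simp only at hx1 hx2 hy1 hy2 ⊢
    set tx : ℝ := x / VT with htx
    set ty : ℝ := y / VT with hty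
    have htxb : |tx| ≤ δ := by
      rw [htx, abs_div, abs_of_pos hVT, div_le_iff₀ hVT]
      rw [abs_le]; constructor <;> nlinarith [abs_le.1 (le_refl |x|)]
    have htyb : |ty| ≤ δ := by
      rw [hty, abs_div, abs_of_pos hVT, div_le_iff₀ hVT]
      rw [abs_le]; constructor <;> nlinarith
    set a : ℝ := Real.exp tx - 1 with ha
    set b : ℝ := Real.exp ty - 1 with hb
    set E : ℝ := Real.exp δ with hE
    set e : ℝ := Real.exp (-δ) with he
    have hE0 : 0 < E := Real.exp_pos δ
    have he0 : 0 < e := Real.exp_pos (-δ)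
    have hsd : s * E = e := by
      have h1 : e * E = 1 := by rw [he, hE, ← Real.exp_add]; simp
      have h2 : s * (E * E) = 1 := by rw [hexp2δ]; field_simp
      apply mul_right_cancel₀ (ne_of_gt hE0)
      rw [mul_assoc, h2, h1]
    have ha1 : |a| ≤ E * |tx| := exp_sub_one_abs_le hδ0 htxb
    have hb1 : |b| ≤ E * |ty| := exp_sub_one_abs_le hδ0 htyb
    have h3 : e * tx ^ 2 ≤ tx * a := exp_sub_one_quad hδ0 htxb
    have h4 : e * ty ^ 2 ≤ ty * b := exp_sub_one_quad hδ0 htyb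
    have h1 : tx * b ≤ E * (|tx| * |ty|) := by
      calc tx * b ≤ |tx * b| := le_abs_self _
        _ = |tx| * |b| := abs_mul _ _
        _ ≤ |tx| * (E * |ty|) := mul_le_mul_of_nonneg_left hb1 (abs_nonneg _)
        _ = E * (|tx| * |ty|) := by ring
    have h2 : ty * a ≤ E * (|tx| * |ty|) := by
      calc ty * a ≤ |ty * a| := le_abs_self _
        _ = |ty| * |a| := abs_mul _ _
        _ ≤ |ty| * (E * |tx|) := mul_le_mul_of_nonneg_left ha1 (abs_nonneg _)
        _ = E * (|tx| * |ty|) := by ring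
    have hsmul : Real.sqrt αR * Real.sqrt αF = s := (Real.sqrt_mul hαR0.le αF).symm
    have hq : 2 * s * (|tx| * |ty|) ≤ αF * tx ^ 2 + αR * ty ^ 2 := by
      have key := sq_nonneg (|tx| * Real.sqrt αF - |ty| * Real.sqrt αR)
      have e1 : (|tx| * Real.sqrt αF) ^ 2 = αF * tx ^ 2 := by
        rw [mul_pow, Real.sq_sqrt hαF0.le, sq_abs]; ring
      have e2 : (|ty| * Real.sqrt αR) ^ 2 = αR * ty ^ 2 := by
        rw [mul_pow, Real.sq_sqrt hαR0.le, sq_abs]; ring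
      have e3 : (|tx| * Real.sqrt αF) * (|ty| * Real.sqrt αR) = s * (|tx| * |ty|) := by
        rw [← hsmul]; ring
      linarith [key, e1, e2, e3]
    have heq : αR * αF * (2 * (E * (|tx| * |ty|))) = e * (2 * s * (|tx| * |ty|)) := by
      rw [← hssq, ← hsd]; ring
    have hmain : αR * αF * (tx * b + ty * a) ≤ αF * (tx * a) + αR * (ty * b) := by
      have f1 : αR * αF * (tx * b + ty * a) ≤ αR * αF * (2 * (E * (|tx| * |ty|))) := by
        apply mul_le_mul_of_nonneg_left (by linarith) (by positivity)
      have f2 : e * (2 * s * (|tx| * |ty|)) ≤ e * (αF * tx ^ 2 + αR * ty ^ 2) :=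
        mul_le_mul_of_nonneg_left hq he0.le
      have f3 : αF * (e * tx ^ 2) ≤ αF * (tx * a) :=
        mul_le_mul_of_nonneg_left h3 hαF0.le
      have f4 : αR * (e * ty ^ 2) ≤ αR * (ty * b) :=
        mul_le_mul_of_nonneg_left h4 hαR0.le
      linarith [f1, f2, f3, f4, heq]
    have hxeq : VT * tx = x := by rw [htx]; field_simp
    have hyeq : VT * ty = y := by rw [hty]; field_simp
    have hfin : x * (iS * b - iS / αR * a) - y * (iS / αF * b - iS * a) =
        iS * VT * ((tx * b + ty * a) - (tx * a / αR + ty * b / αF)) := by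
      rw [← hxeq, ← hyeq]; ring
    rw [hfin]
    have hdiv : tx * b + ty * a ≤ tx * a / αR + ty * b / αF := by
      have heq2 : tx * a / αR + ty * b / αF = (αF * (tx * a) + αR * (ty * b)) / (αR * αF) := by
        field_simp
      rw [heq2, le_div_iff₀ (by positivity)]
      nlinarith [hmain]
    have : (tx * b + ty * a) - (tx * a / αR + ty * b / αF) ≤ 0 := by linarith
    have h6 := mul_le_mul_of_nonneg_left this (by positivity : (0:ℝ) ≤ iS * VT)
    simpa using h6
end
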